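/- Fix a symmetric invertible 4×4 matrix g (with inverse g^{μν}) and a constant k > 0, and set π^{μν} = (√|det g|/(2k)) g^{μν}. Define the linear map from symmetric-in-(μν) tensors f^λ_{μν} (symmetric in the lower indices) to tensors J by J_λ^{μν} := 2 f^{(μ}_{ρλ} π^{ν)ρ} - f^ρ_{ρλ} π^{μν} - δ^{(μ}_λ f^{ν)}_{ρσ} π^{ρσ}. Then the map f ↦ J is inverted by f^λ_{μν} = (k/√|det g|) [ 2 J_{(μ}^{ρλ} g_{ν)ρ} - J_ρ^{ρλ} g_{μν} - J_ρ^{στ} g^{ρλ}(g_{μσ} g_{ντ} - ½ g_{στ} g_{μν}) + (2/3) δ^λ_{(μ} J_ρ^{ρσ} g_{ν)σ} - δ^λ_{(μ} J_{ν)}^{ρσ} g_{ρσ} ], i.e. substituting J(f) into this formula returns f. -/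

import Mathlib

open Matrix
open scoped BigOperators

/-- Kronecker delta on `Fin 4`. -/
def kd (a b : Fin 4) : ℝ := if a = b then 1 else 0

lemma kd_comm (a b : Fin 4) : kd a b = kd b a := by simp [kd, eq_comm]

lemma sum_mul_kd (x : Fin 4 → ℝ) (a : Fin 4) : (∑ b, x b * kd a b) = x a := by
  simp [kd, mul_ite, Finset.sum_ite_eq]

lemma sum_kd_mul (x : Fin 4 → ℝ) (a : Fin 4) : (∑ b, kd a b * x b) = x a := by
  simp [kd, ite_mul, Finset.sum_ite_eq]

section helpers
variable (g h : Fin 4 → Fin 4 → ℝ)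

/-- contract: ∑ ρ, (∑ σ, x σ * h ρ σ) * g b ρ = x b -/
lemma V1 (hgh : ∀ a b, (∑ ρ, g a ρ * h ρ b) = kd a b) (x : Fin 4 → ℝ) (b : Fin 4) :
    (∑ ρ, (∑ σ, x σ * h ρ σ) * g b ρ) = x b := by
  have e1 : ∀ ρ : Fin 4, (∑ σ, x σ * h ρ σ) * g b ρ = ∑ σ, x σ * (g b ρ * h ρ σ) := fun ρ => by
    rw [Finset.sum_mul]; exact Finset.sum_congr rfl fun σ _ => by ring
  rw [Finset.sum_congr rfl fun ρ _ => e1 ρ, Finset.sum_comm]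
  have e2 : ∀ σ : Fin 4, (∑ ρ, x σ * (g b ρ * h ρ σ)) = x σ * kd b σ := fun σ => by
    rw [← Finset.mul_sum, hgh]
  rw [Finset.sum_congr rfl fun σ _ => e2 σ, sum_mul_kd]

/-- contract: ∑ ρ, c * h ρ a * g b ρ = c * kd b a -/
lemma V3 (hgh : ∀ a b, (∑ ρ, g a ρ * h ρ b) = kd a b) (c : ℝ) (a b : Fin 4) :
    (∑ ρ, c * h ρ a * g b ρ) = c * kd b a := by
  have e1 : ∀ ρ : Fin 4, c * h ρ a * g b ρ = c * (g b ρ * h ρ a) := fun ρ => by ring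
  rw [Finset.sum_congr rfl fun ρ _ => e1 ρ, ← Finset.mul_sum, hgh]

end helpers

lemma key (g h : Fin 4 → Fin 4 → ℝ)
    (hg : ∀ a b, g a b = g b a) (hh : ∀ a b, h a b = h b a)
    (hgh : ∀ a b, (∑ ρ, g a ρ * h ρ b) = kd a b)
    (f : Fin 4 → Fin 4 → Fin 4 → ℝ) (hf : ∀ l μ ν, f l μ ν = f l ν μ)
    (J : Fin 4 → Fin 4 → Fin 4 → ℝ)
    (hJ : ∀ l μ ν, J l μ ν
      = ((∑ ρ, f μ ρ l * h ν ρ) + (∑ ρ, f ν ρ l * h μ ρ))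
        - (∑ ρ, f ρ ρ l) * h μ ν
        - (1 / 2) * (kd μ l * (∑ ρ, ∑ σ, f ν ρ σ * h ρ σ)
                      + kd ν l * (∑ ρ, ∑ σ, f μ ρ σ * h ρ σ))) :
    ∀ l μ ν, 2 * f l μ ν
      = ((∑ ρ, J μ ρ l * g ν ρ) + (∑ ρ, J ν ρ l * g μ ρ))
          - (∑ ρ, J ρ ρ l) * g μ ν
          - (∑ ρ, ∑ σ, ∑ τ, J ρ σ τ * h ρ l *
              (g μ σ * g ν τ - (1 / 2) * g σ τ * g μ ν))
          + (2 / 3) * (1 / 2) * (kd l μ * (∑ ρ, ∑ σ, J ρ ρ σ * g ν σ)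
                                  + kd l ν * (∑ ρ, ∑ σ, J ρ ρ σ * g μ σ))
          - (1 / 2) * (kd l μ * (∑ ρ, ∑ σ, J ν ρ σ * g ρ σ)
                        + kd l ν * (∑ ρ, ∑ σ, J μ ρ σ * g ρ σ)) := by
  have hhg : ∀ a b, (∑ ρ, h a ρ * g ρ b) = kd a b := fun a b => by
    have e : (∑ ρ, h a ρ * g ρ b) = ∑ ρ, g b ρ * h ρ a :=
      Finset.sum_congr rfl fun ρ _ => by rw [hh a ρ, hg ρ b]; ring
    rw [e, hgh, kd_comm]
  intro l μ ν
  -- trace over first two indices of J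
  have hTr : ∀ a : Fin 4, (∑ ρ, J ρ ρ a) = -(3/2) * (∑ ρ, ∑ σ, f a ρ σ * h ρ σ) := by
    intro a
    have expand : (∑ ρ, J ρ ρ a)
        = ∑ ρ, ((∑ σ, f ρ σ ρ * h a σ) + (∑ σ, f a σ ρ * h ρ σ)
            - (∑ σ, f σ σ ρ) * h ρ a
            - (1/2) * kd ρ ρ * (∑ σ, ∑ τ, f a σ τ * h σ τ)
            - (1/2) * kd a ρ * (∑ σ, ∑ τ, f ρ σ τ * h σ τ)) :=
      Finset.sum_congr rfl fun ρ _ => by rw [hJ]; ring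
    rw [expand, Finset.sum_sub_distrib, Finset.sum_sub_distrib, Finset.sum_sub_distrib,
      Finset.sum_add_distrib]
    have p1 : (∑ ρ, ∑ σ, f ρ σ ρ * h a σ) = ∑ ρ, (∑ σ, f σ σ ρ) * h ρ a := by
      rw [Finset.sum_comm]
      refine Finset.sum_congr rfl fun σ _ => ?_
      rw [Finset.sum_mul]
      exact Finset.sum_congr rfl fun ρ _ => by rw [hf ρ σ ρ, hh a σ]
    have p2 : (∑ ρ, ∑ σ, f a σ ρ * h ρ σ) = ∑ ρ, ∑ σ, f a ρ σ * h ρ σ := by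
      refine Finset.sum_congr rfl fun ρ _ => Finset.sum_congr rfl fun σ _ => ?_
      rw [hf a σ ρ, hh ρ σ]
    have p3 : (∑ ρ : Fin 4, (1/2) * kd ρ ρ * (∑ σ, ∑ τ, f a σ τ * h σ τ))
        = 2 * (∑ σ, ∑ τ, f a σ τ * h σ τ) := by
      simp [kd]; ring
    have p4 : (∑ ρ : Fin 4, (1/2) * kd a ρ * (∑ σ, ∑ τ, f ρ σ τ * h σ τ))
        = (1/2) * (∑ σ, ∑ τ, f a σ τ * h σ τ) := by
      have e : (∑ ρ : Fin 4, (1/2) * kd a ρ * (∑ σ, ∑ τ, f ρ σ τ * h σ τ))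
          = ∑ ρ : Fin 4, kd a ρ * ((1/2) * (∑ σ, ∑ τ, f ρ σ τ * h σ τ)) :=
        Finset.sum_congr rfl fun ρ _ => by ring
      rw [e, sum_kd_mul (fun ρ => (1/2) * (∑ σ, ∑ τ, f ρ σ τ * h σ τ)) a]
    rw [p1, p2, p3, p4]; ring
  -- trace of J over the two upper indices with g
  have hTrg : ∀ a : Fin 4, (∑ ρ, ∑ σ, J a ρ σ * g ρ σ)
      = -2 * (∑ ρ, f ρ ρ a) - (∑ σ, (∑ ρ, ∑ τ, f σ ρ τ * h ρ τ) * g a σ) := by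
    intro a
    have expand : (∑ ρ, ∑ σ, J a ρ σ * g ρ σ)
        = ∑ ρ, ∑ σ, ((∑ τ, f ρ τ a * h σ τ) * g ρ σ
            + (∑ τ, f σ τ a * h ρ τ) * g ρ σ
            - (∑ τ, f τ τ a) * h ρ σ * g ρ σ
            - (1/2) * kd ρ a * (∑ α, ∑ β, f σ α β * h α β) * g ρ σ
            - (1/2) * kd σ a * (∑ α, ∑ β, f ρ α β * h α β) * g ρ σ) :=
      Finset.sum_congr rfl fun ρ _ => Finset.sum_congr rfl fun σ _ => by rw [hJ]; ring
    rw [expand]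
    simp only [Finset.sum_sub_distrib, Finset.sum_add_distrib]
    have q1 : (∑ ρ, ∑ σ, (∑ τ, f ρ τ a * h σ τ) * g ρ σ) = ∑ ρ, f ρ ρ a :=
      Finset.sum_congr rfl fun ρ _ => V1 g h hgh (fun τ => f ρ τ a) ρ
    have q2 : (∑ ρ, ∑ σ, (∑ τ, f σ τ a * h ρ τ) * g ρ σ) = ∑ ρ, f ρ ρ a := by
      rw [Finset.sum_comm]
      refine Finset.sum_congr rfl fun σ _ => ?_
      have e : ∀ ρ : Fin 4, (∑ τ, f σ τ a * h ρ τ) * g ρ σ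
          = (∑ τ, f σ τ a * h ρ τ) * g σ ρ := fun ρ => by rw [hg ρ σ]
      rw [Finset.sum_congr rfl fun ρ _ => e ρ]
      exact V1 g h hgh (fun τ => f σ τ a) σ
    have q3 : (∑ ρ, ∑ σ, (∑ τ, f τ τ a) * h ρ σ * g ρ σ) = 4 * (∑ τ, f τ τ a) := by
      have e : ∀ ρ : Fin 4, (∑ σ, (∑ τ, f τ τ a) * h ρ σ * g ρ σ)
          = (∑ τ, f τ τ a) * kd ρ ρ := fun ρ => by
        have e2 : ∀ σ : Fin 4, (∑ τ, f τ τ a) * h ρ σ * g ρ σ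
            = (∑ τ, f τ τ a) * (h ρ σ * g σ ρ) := fun σ => by rw [hg ρ σ]; ring
        rw [Finset.sum_congr rfl fun σ _ => e2 σ, ← Finset.mul_sum, hhg]
      rw [Finset.sum_congr rfl fun ρ _ => e ρ]
      simp [kd]
      try ring
    have q4 : (∑ ρ, ∑ σ, (1/2) * kd ρ a * (∑ α, ∑ β, f σ α β * h α β) * g ρ σ)
        = (1/2) * (∑ σ, (∑ α, ∑ β, f σ α β * h α β) * g a σ) := by
      have e : ∀ ρ : Fin 4, (∑ σ, (1/2) * kd ρ a * (∑ α, ∑ β, f σ α β * h α β) * g ρ σ)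
          = kd a ρ * ((1/2) * ∑ σ, (∑ α, ∑ β, f σ α β * h α β) * g ρ σ) := fun ρ => by
        rw [kd_comm a ρ, Finset.mul_sum, Finset.mul_sum]
        exact Finset.sum_congr rfl fun σ _ => by ring
      rw [Finset.sum_congr rfl fun ρ _ => e ρ,
        sum_kd_mul (fun ρ => (1/2) * ∑ σ, (∑ α, ∑ β, f σ α β * h α β) * g ρ σ) a]
    have q5 : (∑ ρ, ∑ σ, (1/2) * kd σ a * (∑ α, ∑ β, f ρ α β * h α β) * g ρ σ)
        = (1/2) * (∑ σ, (∑ α, ∑ β, f σ α β * h α β) * g a σ) := by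
      have e : ∀ ρ : Fin 4, (∑ σ, (1/2) * kd σ a * (∑ α, ∑ β, f ρ α β * h α β) * g ρ σ)
          = (1/2) * (∑ α, ∑ β, f ρ α β * h α β) * g ρ a := fun ρ => by
        have e2 : ∀ σ : Fin 4, (1/2) * kd σ a * (∑ α, ∑ β, f ρ α β * h α β) * g ρ σ
            = kd a σ * ((1/2) * (∑ α, ∑ β, f ρ α β * h α β) * g ρ σ) := fun σ => by
          rw [kd_comm a σ]; ring
        rw [Finset.sum_congr rfl fun σ _ => e2 σ,
          sum_kd_mul (fun σ => (1/2) * (∑ α, ∑ β, f ρ α β * h α β) * g ρ σ) a]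
      rw [Finset.sum_congr rfl fun ρ _ => e ρ, Finset.mul_sum]
      refine Finset.sum_congr rfl fun ρ _ => by rw [hg ρ a]; ring
    rw [q1, q2, q3, q4, q5]; ring
  -- trace of J over first two indices, contracted with g
  have hTrg2 : ∀ b : Fin 4, (∑ ρ, ∑ σ, J ρ ρ σ * g b σ)
      = -(3/2) * (∑ σ, (∑ ρ, ∑ τ, f σ ρ τ * h ρ τ) * g b σ) := by
    intro b
    rw [Finset.sum_comm]
    have e : ∀ σ : Fin 4, (∑ ρ, J ρ ρ σ * g b σ)
        = (-(3/2) * (∑ ρ, ∑ τ, f σ ρ τ * h ρ τ)) * g b σ := fun σ => by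
      rw [← Finset.sum_mul, hTr σ]
    rw [Finset.sum_congr rfl fun σ _ => e σ, Finset.mul_sum]
    exact Finset.sum_congr rfl fun σ _ => by ring
  -- the two single-contraction terms
  have hT1 : ∀ a b : Fin 4, (∑ ρ, J a ρ l * g b ρ)
      = (∑ ρ, (∑ σ, f ρ σ a * h l σ) * g b ρ) + f l a b
        - (∑ ρ, f ρ ρ a) * kd b l
        - (1/2) * (∑ ρ, ∑ σ, f l ρ σ * h ρ σ) * g a b
        - (1/2) * kd l a * (∑ σ, (∑ ρ, ∑ τ, f σ ρ τ * h ρ τ) * g b σ) := by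
    intro a b
    have expand : (∑ ρ, J a ρ l * g b ρ)
        = ∑ ρ, ((∑ σ, f ρ σ a * h l σ) * g b ρ
            + (∑ σ, f l σ a * h ρ σ) * g b ρ
            - (∑ σ, f σ σ a) * h ρ l * g b ρ
            - (1/2) * kd ρ a * (∑ σ, ∑ τ, f l σ τ * h σ τ) * g b ρ
            - (1/2) * kd l a * (∑ σ, ∑ τ, f ρ σ τ * h σ τ) * g b ρ) :=
      Finset.sum_congr rfl fun ρ _ => by rw [hJ]; ring
    rw [expand]
    simp only [Finset.sum_sub_distrib, Finset.sum_add_distrib]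
    have p2 : (∑ ρ, (∑ σ, f l σ a * h ρ σ) * g b ρ) = f l a b := by
      rw [V1 g h hgh (fun σ => f l σ a) b]; exact (hf l a b).symm
    have p3 : (∑ ρ, (∑ σ, f σ σ a) * h ρ l * g b ρ) = (∑ σ, f σ σ a) * kd b l :=
      V3 g h hgh (∑ σ, f σ σ a) l b
    have p4 : (∑ ρ, (1/2) * kd ρ a * (∑ σ, ∑ τ, f l σ τ * h σ τ) * g b ρ)
        = (1/2) * (∑ ρ, ∑ σ, f l ρ σ * h ρ σ) * g a b := by
      have e : ∀ ρ : Fin 4, (1/2) * kd ρ a * (∑ σ, ∑ τ, f l σ τ * h σ τ) * g b ρ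
          = kd a ρ * ((1/2) * (∑ σ, ∑ τ, f l σ τ * h σ τ) * g b ρ) := fun ρ => by
        rw [kd_comm a ρ]; ring
      rw [Finset.sum_congr rfl fun ρ _ => e ρ,
        sum_kd_mul (fun ρ => (1/2) * (∑ σ, ∑ τ, f l σ τ * h σ τ) * g b ρ) a, hg b a]
    have p5 : (∑ ρ, (1/2) * kd l a * (∑ σ, ∑ τ, f ρ σ τ * h σ τ) * g b ρ)
        = (1/2) * kd l a * (∑ σ, (∑ ρ, ∑ τ, f σ ρ τ * h ρ τ) * g b σ) := by
      rw [Finset.mul_sum]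
      exact Finset.sum_congr rfl fun ρ _ => by ring
    rw [p2, p3, p4, p5]
  -- the triple contraction term
  have hT4 : (∑ ρ, ∑ σ, ∑ τ, J ρ σ τ * h ρ l *
        (g μ σ * g ν τ - (1 / 2) * g σ τ * g μ ν))
      = (∑ ρ, (∑ σ, f ρ σ μ * h l σ) * g ν ρ) + (∑ ρ, (∑ σ, f ρ σ ν * h l σ) * g μ ρ)
        - (1/2) * (kd μ l * (∑ σ, (∑ ρ, ∑ τ, f σ ρ τ * h ρ τ) * g ν σ)
                   + kd ν l * (∑ σ, (∑ ρ, ∑ τ, f σ ρ τ * h ρ τ) * g μ σ))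
        + (1/2) * (∑ ρ, ∑ σ, f l ρ σ * h ρ σ) * g μ ν := by
    have split : (∑ ρ, ∑ σ, ∑ τ, J ρ σ τ * h ρ l *
          (g μ σ * g ν τ - (1 / 2) * g σ τ * g μ ν))
        = (∑ ρ, ∑ σ, ∑ τ, J ρ σ τ * h ρ l * (g μ σ * g ν τ))
          - (∑ ρ, ∑ σ, ∑ τ, J ρ σ τ * h ρ l * g σ τ) * ((1/2) * g μ ν) := by
      have e : ∀ ρ σ τ : Fin 4, J ρ σ τ * h ρ l * (g μ σ * g ν τ - (1 / 2) * g σ τ * g μ ν)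
          = J ρ σ τ * h ρ l * (g μ σ * g ν τ)
            - J ρ σ τ * h ρ l * g σ τ * ((1/2) * g μ ν) := fun ρ σ τ => by ring
      rw [Finset.sum_congr rfl fun ρ _ => Finset.sum_congr rfl fun σ _ =>
        Finset.sum_congr rfl fun τ _ => e ρ σ τ]
      simp only [Finset.sum_sub_distrib, Finset.sum_mul]
    rw [split]
    -- the B part
    have hB : (∑ ρ, ∑ σ, ∑ τ, J ρ σ τ * h ρ l * g σ τ)
        = -2 * (∑ ρ, (∑ σ, f σ σ ρ) * h ρ l) - (∑ ρ, ∑ σ, f l ρ σ * h ρ σ) := by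
      have e : ∀ ρ : Fin 4, (∑ σ, ∑ τ, J ρ σ τ * h ρ l * g σ τ)
          = (-2 * (∑ σ, f σ σ ρ)
              - (∑ σ, (∑ α, ∑ β, f σ α β * h α β) * g ρ σ)) * h ρ l := fun ρ => by
        have e2 : ∀ σ τ : Fin 4, J ρ σ τ * h ρ l * g σ τ = J ρ σ τ * g σ τ * h ρ l :=
          fun σ τ => by ring
        rw [Finset.sum_congr rfl fun σ _ => Finset.sum_congr rfl fun τ _ => e2 σ τ]
        simp only [← Finset.sum_mul]
        rw [hTrg ρ]
      rw [Finset.sum_congr rfl fun ρ _ => e ρ]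
      have e3 : ∀ ρ : Fin 4, (-2 * (∑ σ, f σ σ ρ)
            - (∑ σ, (∑ α, ∑ β, f σ α β * h α β) * g ρ σ)) * h ρ l
          = -2 * ((∑ σ, f σ σ ρ) * h ρ l)
            - (∑ σ, (∑ α, ∑ β, f σ α β * h α β) * g ρ σ) * h ρ l := fun ρ => by ring
      rw [Finset.sum_congr rfl fun ρ _ => e3 ρ, Finset.sum_sub_distrib, ← Finset.mul_sum]
      congr 1
      -- ⊢ ∑ ρ, (∑ σ, S σ * g ρ σ) * h ρ l = ∑ ρ, ∑ σ, f l ρ σ * h ρ σ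
      have e4 : ∀ ρ : Fin 4, (∑ σ, (∑ α, ∑ β, f σ α β * h α β) * g ρ σ) * h ρ l
          = (∑ σ, (∑ α, ∑ β, f σ α β * h α β) * g ρ σ) * h l ρ := fun ρ => by rw [hh ρ l]
      rw [Finset.sum_congr rfl fun ρ _ => e4 ρ,
        V1 h g hhg (fun σ => ∑ α, ∑ β, f σ α β * h α β) l]
    rw [hB]
    -- the A part
    have expandA : (∑ ρ, ∑ σ, ∑ τ, J ρ σ τ * h ρ l * (g μ σ * g ν τ))
        = ∑ ρ, ∑ σ, ∑ τ, ((∑ α, f σ α ρ * h τ α) * h ρ l * g μ σ * g ν τ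
            + (∑ α, f τ α ρ * h σ α) * h ρ l * g μ σ * g ν τ
            - (∑ α, f α α ρ) * h σ τ * h ρ l * g μ σ * g ν τ
            - (1/2) * kd σ ρ * (∑ α, ∑ β, f τ α β * h α β) * h ρ l * g μ σ * g ν τ
            - (1/2) * kd τ ρ * (∑ α, ∑ β, f σ α β * h α β) * h ρ l * g μ σ * g ν τ) :=
      Finset.sum_congr rfl fun ρ _ => Finset.sum_congr rfl fun σ _ =>
        Finset.sum_congr rfl fun τ _ => by rw [hJ]; ring
    rw [expandA]
    simp only [Finset.sum_sub_distrib, Finset.sum_add_distrib]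
    have hA1 : (∑ ρ, ∑ σ, ∑ τ, (∑ α, f σ α ρ * h τ α) * h ρ l * g μ σ * g ν τ)
        = ∑ ρ, (∑ σ, f ρ σ ν * h l σ) * g μ ρ := by
      have e : ∀ ρ σ : Fin 4, (∑ τ, (∑ α, f σ α ρ * h τ α) * h ρ l * g μ σ * g ν τ)
          = f σ ν ρ * (h ρ l * g μ σ) := fun ρ σ => by
        have e2 : ∀ τ : Fin 4, (∑ α, f σ α ρ * h τ α) * h ρ l * g μ σ * g ν τ
            = ((∑ α, f σ α ρ * h τ α) * g ν τ) * (h ρ l * g μ σ) := fun τ => by ring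
        rw [Finset.sum_congr rfl fun τ _ => e2 τ, ← Finset.sum_mul,
          V1 g h hgh (fun α => f σ α ρ) ν]
      rw [Finset.sum_congr rfl fun ρ _ => Finset.sum_congr rfl fun σ _ => e ρ σ,
        Finset.sum_comm]
      refine Finset.sum_congr rfl fun σ _ => ?_
      rw [Finset.sum_mul]
      exact Finset.sum_congr rfl fun ρ _ => by rw [hf σ ν ρ, hh ρ l]; ring
    have hA2 : (∑ ρ, ∑ σ, ∑ τ, (∑ α, f τ α ρ * h σ α) * h ρ l * g μ σ * g ν τ)
        = ∑ ρ, (∑ σ, f ρ σ μ * h l σ) * g ν ρ := by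
      have e : ∀ ρ τ : Fin 4, (∑ σ, (∑ α, f τ α ρ * h σ α) * h ρ l * g μ σ * g ν τ)
          = f τ μ ρ * (h ρ l * g ν τ) := fun ρ τ => by
        have e2 : ∀ σ : Fin 4, (∑ α, f τ α ρ * h σ α) * h ρ l * g μ σ * g ν τ
            = ((∑ α, f τ α ρ * h σ α) * g μ σ) * (h ρ l * g ν τ) := fun σ => by ring
        rw [Finset.sum_congr rfl fun σ _ => e2 σ, ← Finset.sum_mul,
          V1 g h hgh (fun α => f τ α ρ) μ]
      have swap : ∀ ρ : Fin 4, (∑ σ, ∑ τ, (∑ α, f τ α ρ * h σ α) * h ρ l * g μ σ * g ν τ)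
          = ∑ τ, ∑ σ, (∑ α, f τ α ρ * h σ α) * h ρ l * g μ σ * g ν τ := fun ρ =>
        Finset.sum_comm
      rw [Finset.sum_congr rfl fun ρ _ => (swap ρ).trans
        (Finset.sum_congr rfl fun τ _ => e ρ τ), Finset.sum_comm]
      refine Finset.sum_congr rfl fun τ _ => ?_
      rw [Finset.sum_mul]
      exact Finset.sum_congr rfl fun ρ _ => by rw [hf τ μ ρ, hh ρ l]; ring
    have hA3 : (∑ ρ, ∑ σ, ∑ τ, (∑ α, f α α ρ) * h σ τ * h ρ l * g μ σ * g ν τ)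
        = (∑ ρ, (∑ σ, f σ σ ρ) * h ρ l) * g μ ν := by
      have hgg : (∑ σ, ∑ τ, h σ τ * g μ σ * g ν τ) = g μ ν := by
        have e : ∀ σ : Fin 4, (∑ τ, h σ τ * g μ σ * g ν τ) = g μ σ * kd σ ν := fun σ => by
          have e2 : ∀ τ : Fin 4, h σ τ * g μ σ * g ν τ = g μ σ * (h σ τ * g τ ν) :=
            fun τ => by rw [hg τ ν]; ring
          rw [Finset.sum_congr rfl fun τ _ => e2 τ, ← Finset.mul_sum, hhg]
        have e3 : ∀ σ : Fin 4, g μ σ * kd σ ν = g μ σ * kd ν σ := fun σ => by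
          rw [kd_comm σ ν]
        rw [Finset.sum_congr rfl fun σ _ => e σ,
          Finset.sum_congr rfl fun σ _ => e3 σ,
          sum_mul_kd (fun σ => g μ σ) ν]
      have e : ∀ ρ : Fin 4, (∑ σ, ∑ τ, (∑ α, f α α ρ) * h σ τ * h ρ l * g μ σ * g ν τ)
          = ((∑ α, f α α ρ) * h ρ l) * (∑ σ, ∑ τ, h σ τ * g μ σ * g ν τ) := fun ρ => by
        rw [Finset.mul_sum]
        refine Finset.sum_congr rfl fun σ _ => ?_
        rw [Finset.mul_sum]
        exact Finset.sum_congr rfl fun τ _ => by ring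
      rw [Finset.sum_congr rfl fun ρ _ => e ρ]
      have e5 : ∀ ρ : Fin 4, ((∑ α, f α α ρ) * h ρ l) * (∑ σ, ∑ τ, h σ τ * g μ σ * g ν τ)
          = ((∑ α, f α α ρ) * h ρ l) * g μ ν := fun ρ => by rw [hgg]
      rw [Finset.sum_congr rfl fun ρ _ => e5 ρ, ← Finset.sum_mul]
    have hA4 : (∑ ρ, ∑ σ, ∑ τ, (1/2) * kd σ ρ * (∑ α, ∑ β, f τ α β * h α β)
          * h ρ l * g μ σ * g ν τ)
        = kd μ l * ((1/2) * (∑ σ, (∑ ρ, ∑ τ, f σ ρ τ * h ρ τ) * g ν σ)) := by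
      rw [Finset.sum_comm]
      have sw : ∀ σ : Fin 4, (∑ ρ, ∑ τ, (1/2) * kd σ ρ * (∑ α, ∑ β, f τ α β * h α β)
            * h ρ l * g μ σ * g ν τ)
          = ∑ τ, ∑ ρ, (1/2) * kd σ ρ * (∑ α, ∑ β, f τ α β * h α β)
            * h ρ l * g μ σ * g ν τ := fun σ => Finset.sum_comm
      rw [Finset.sum_congr rfl fun σ _ => sw σ]
      have e : ∀ σ τ : Fin 4, (∑ ρ, (1/2) * kd σ ρ * (∑ α, ∑ β, f τ α β * h α β)
            * h ρ l * g μ σ * g ν τ)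
          = ((∑ α, ∑ β, f τ α β * h α β) * g ν τ) * ((1/2) * (g μ σ * h σ l)) := fun σ τ => by
        have e2 : ∀ ρ : Fin 4, (1/2) * kd σ ρ * (∑ α, ∑ β, f τ α β * h α β)
              * h ρ l * g μ σ * g ν τ
            = kd σ ρ * (((∑ α, ∑ β, f τ α β * h α β) * g ν τ) * ((1/2) * (g μ σ * h ρ l))) :=
          fun ρ => by ring
        rw [Finset.sum_congr rfl fun ρ _ => e2 ρ,
          sum_kd_mul (fun ρ => ((∑ α, ∑ β, f τ α β * h α β) * g ν τ)
            * ((1/2) * (g μ σ * h ρ l))) σ]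
      rw [Finset.sum_congr rfl fun σ _ => Finset.sum_congr rfl fun τ _ => e σ τ]
      have e3 : ∀ σ : Fin 4, (∑ τ, ((∑ α, ∑ β, f τ α β * h α β) * g ν τ)
            * ((1/2) * (g μ σ * h σ l)))
          = (g μ σ * h σ l) * ((1/2) * (∑ τ, (∑ α, ∑ β, f τ α β * h α β) * g ν τ)) :=
        fun σ => by rw [Finset.mul_sum, Finset.mul_sum]
                    exact Finset.sum_congr rfl fun τ _ => by ring
      rw [Finset.sum_congr rfl fun σ _ => e3 σ, ← Finset.sum_mul, hgh]
    have hA5 : (∑ ρ, ∑ σ, ∑ τ, (1/2) * kd τ ρ * (∑ α, ∑ β, f σ α β * h α β)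
          * h ρ l * g μ σ * g ν τ)
        = kd ν l * ((1/2) * (∑ σ, (∑ ρ, ∑ τ, f σ ρ τ * h ρ τ) * g μ σ)) := by
      rw [Finset.sum_comm]
      have sw : ∀ σ : Fin 4, (∑ ρ, ∑ τ, (1/2) * kd τ ρ * (∑ α, ∑ β, f σ α β * h α β)
            * h ρ l * g μ σ * g ν τ)
          = ∑ τ, ∑ ρ, (1/2) * kd τ ρ * (∑ α, ∑ β, f σ α β * h α β)
            * h ρ l * g μ σ * g ν τ := fun σ => Finset.sum_comm
      rw [Finset.sum_congr rfl fun σ _ => sw σ]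
      have e : ∀ σ τ : Fin 4, (∑ ρ, (1/2) * kd τ ρ * (∑ α, ∑ β, f σ α β * h α β)
            * h ρ l * g μ σ * g ν τ)
          = (g ν τ * h τ l) * (((∑ α, ∑ β, f σ α β * h α β) * g μ σ) * (1/2)) := fun σ τ => by
        have e2 : ∀ ρ : Fin 4, (1/2) * kd τ ρ * (∑ α, ∑ β, f σ α β * h α β)
              * h ρ l * g μ σ * g ν τ
            = kd τ ρ * ((g ν τ * h ρ l) * (((∑ α, ∑ β, f σ α β * h α β) * g μ σ) * (1/2))) :=
          fun ρ => by ring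
        rw [Finset.sum_congr rfl fun ρ _ => e2 ρ,
          sum_kd_mul (fun ρ => (g ν τ * h ρ l)
            * (((∑ α, ∑ β, f σ α β * h α β) * g μ σ) * (1/2))) τ]
      rw [Finset.sum_congr rfl fun σ _ => Finset.sum_congr rfl fun τ _ => e σ τ]
      have e3 : ∀ σ : Fin 4, (∑ τ, (g ν τ * h τ l)
            * (((∑ α, ∑ β, f σ α β * h α β) * g μ σ) * (1/2)))
          = (∑ τ, g ν τ * h τ l) * (((∑ α, ∑ β, f σ α β * h α β) * g μ σ) * (1/2)) :=
        fun σ => by rw [← Finset.sum_mul]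
      rw [Finset.sum_congr rfl fun σ _ => e3 σ]
      have e4 : ∀ σ : Fin 4, (∑ τ, g ν τ * h τ l) * (((∑ α, ∑ β, f σ α β * h α β) * g μ σ) * (1/2))
          = kd ν l * (((∑ α, ∑ β, f σ α β * h α β) * g μ σ) * (1/2)) := fun σ => by rw [hgh]
      rw [Finset.sum_congr rfl fun σ _ => e4 σ, ← Finset.mul_sum, Finset.mul_sum]
      rw [Finset.mul_sum, Finset.mul_sum]
      exact Finset.sum_congr rfl fun σ _ => by ring
    rw [hA1, hA2, hA3, hA4, hA5]
    ring
  rw [hT1 μ ν, hT1 ν μ, hTr l, hT4, hTrg2 ν, hTrg2 μ, hTrg ν, hTrg μ]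
  rw [hf l ν μ, hg ν μ, kd_comm ν l, kd_comm μ l]
  ring

/-- Inversion formula (eq:f(J,g)) for the map `f ↦ J` given by
`J_λ^{μν} = 2 f^{(μ}_{ρλ} π^{ν)ρ} - f^ρ_{ρλ} π^{μν} - δ^{(μ}_λ f^{ν)}_{ρσ} π^{ρσ}`
with `π^{μν} = (√|det g|/(2k)) g^{μν}`. -/
theorem nonmetricity_inversion (k : ℝ) (hk : 0 < k)
    (g : Matrix (Fin 4) (Fin 4) ℝ) (hsym : g.IsSymm) (hdet : IsUnit g.det)
    (π : Fin 4 → Fin 4 → ℝ)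
    (hπ : ∀ μ ν, π μ ν = Real.sqrt |g.det| / (2 * k) * g⁻¹ μ ν)
    (f : Fin 4 → Fin 4 → Fin 4 → ℝ) (hf : ∀ l μ ν, f l μ ν = f l ν μ)
    (J : Fin 4 → Fin 4 → Fin 4 → ℝ)
    (hJ : ∀ l μ ν, J l μ ν
      = ((∑ ρ, f μ ρ l * π ν ρ) + (∑ ρ, f ν ρ l * π μ ρ))
        - (∑ ρ, f ρ ρ l) * π μ ν
        - (1 / 2) * (kd μ l * (∑ ρ, ∑ σ, f ν ρ σ * π ρ σ)
                      + kd ν l * (∑ ρ, ∑ σ, f μ ρ σ * π ρ σ))) :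
    ∀ l μ ν, f l μ ν
      = (k / Real.sqrt |g.det|) *
          (((∑ ρ, J μ ρ l * g ν ρ) + (∑ ρ, J ν ρ l * g μ ρ))
            - (∑ ρ, J ρ ρ l) * g μ ν
            - (∑ ρ, ∑ σ, ∑ τ, J ρ σ τ * g⁻¹ ρ l *
                (g μ σ * g ν τ - (1 / 2) * g σ τ * g μ ν))
            + (2 / 3) * (1 / 2) * (kd l μ * (∑ ρ, ∑ σ, J ρ ρ σ * g ν σ)
                                    + kd l ν * (∑ ρ, ∑ σ, J ρ ρ σ * g μ σ))
            - (1 / 2) * (kd l μ * (∑ ρ, ∑ σ, J ν ρ σ * g ρ σ)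
                          + kd l ν * (∑ ρ, ∑ σ, J μ ρ σ * g ρ σ))) := by
  have hdet0 : g.det ≠ 0 := hdet.ne_zero
  have hsq : Real.sqrt |g.det| ≠ 0 := by
    positivity
  have hc0 : Real.sqrt |g.det| / (2 * k) ≠ 0 := by positivity
  have hg' : ∀ a b, g a b = g b a := fun a b => (hsym.apply a b).symm
  have hinvsym : (g⁻¹).IsSymm := by
    unfold Matrix.IsSymm
    rw [Matrix.transpose_nonsing_inv, hsym]
  have hh : ∀ a b, g⁻¹ a b = g⁻¹ b a := fun a b => (hinvsym.apply a b).symm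
  have hmul := Matrix.mul_nonsing_inv g hdet
  have hgh : ∀ a b, (∑ ρ, g a ρ * g⁻¹ ρ b) = kd a b := fun a b => by
    have e := congr_fun (congr_fun hmul a) b
    rw [Matrix.mul_apply, Matrix.one_apply] at e
    simpa [kd] using e
  obtain ⟨J0, hJ0def⟩ : ∃ J0 : Fin 4 → Fin 4 → Fin 4 → ℝ,
      J0 = fun x y z => (1 / (Real.sqrt |g.det| / (2 * k))) * J x y z := ⟨_, rfl⟩
  have hJc : ∀ l μ ν, J l μ ν = (Real.sqrt |g.det| / (2 * k)) *
      (((∑ ρ, f μ ρ l * g⁻¹ ν ρ) + (∑ ρ, f ν ρ l * g⁻¹ μ ρ))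
        - (∑ ρ, f ρ ρ l) * g⁻¹ μ ν
        - (1 / 2) * (kd μ l * (∑ ρ, ∑ σ, f ν ρ σ * g⁻¹ ρ σ)
                      + kd ν l * (∑ ρ, ∑ σ, f μ ρ σ * g⁻¹ ρ σ))) := by
    intro l μ ν
    rw [hJ]
    simp only [hπ, Fin.sum_univ_four]
    ring
  have hJ0 : ∀ l μ ν, J0 l μ ν
      = ((∑ ρ, f μ ρ l * g⁻¹ ν ρ) + (∑ ρ, f ν ρ l * g⁻¹ μ ρ))
        - (∑ ρ, f ρ ρ l) * g⁻¹ μ ν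
        - (1 / 2) * (kd μ l * (∑ ρ, ∑ σ, f ν ρ σ * g⁻¹ ρ σ)
                      + kd ν l * (∑ ρ, ∑ σ, f μ ρ σ * g⁻¹ ρ σ)) := by
    intro l μ ν
    rw [hJ0def]
    show (1 / (Real.sqrt |g.det| / (2 * k))) * J l μ ν = _
    rw [hJc l μ ν, ← mul_assoc, one_div, inv_mul_cancel₀ hc0, one_mul]
  have hJc2 : ∀ x y z, J x y z = (Real.sqrt |g.det| / (2 * k)) * J0 x y z := by
    intro x y z
    rw [hJ0def]
    show J x y z = (Real.sqrt |g.det| / (2 * k)) * ((1 / (Real.sqrt |g.det| / (2 * k))) * J x y z)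
    rw [← mul_assoc, mul_one_div, div_self hc0, one_mul]
  have hkey := key g (fun a b => g⁻¹ a b) hg' hh hgh f hf J0 hJ0
  intro l μ ν
  have hkeyl := hkey l μ ν
  have hpull : (((∑ ρ, J μ ρ l * g ν ρ) + (∑ ρ, J ν ρ l * g μ ρ))
            - (∑ ρ, J ρ ρ l) * g μ ν
            - (∑ ρ, ∑ σ, ∑ τ, J ρ σ τ * g⁻¹ ρ l *
                (g μ σ * g ν τ - (1 / 2) * g σ τ * g μ ν))
            + (2 / 3) * (1 / 2) * (kd l μ * (∑ ρ, ∑ σ, J ρ ρ σ * g ν σ)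
                                    + kd l ν * (∑ ρ, ∑ σ, J ρ ρ σ * g μ σ))
            - (1 / 2) * (kd l μ * (∑ ρ, ∑ σ, J ν ρ σ * g ρ σ)
                          + kd l ν * (∑ ρ, ∑ σ, J μ ρ σ * g ρ σ)))
      = (Real.sqrt |g.det| / (2 * k)) *
        (((∑ ρ, J0 μ ρ l * g ν ρ) + (∑ ρ, J0 ν ρ l * g μ ρ))
            - (∑ ρ, J0 ρ ρ l) * g μ ν
            - (∑ ρ, ∑ σ, ∑ τ, J0 ρ σ τ * g⁻¹ ρ l *
                (g μ σ * g ν τ - (1 / 2) * g σ τ * g μ ν))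
            + (2 / 3) * (1 / 2) * (kd l μ * (∑ ρ, ∑ σ, J0 ρ ρ σ * g ν σ)
                                    + kd l ν * (∑ ρ, ∑ σ, J0 ρ ρ σ * g μ σ))
            - (1 / 2) * (kd l μ * (∑ ρ, ∑ σ, J0 ν ρ σ * g ρ σ)
                          + kd l ν * (∑ ρ, ∑ σ, J0 μ ρ σ * g ρ σ))) := by
    simp only [hJc2, Fin.sum_univ_four]
    ring
  rw [hpull, ← mul_assoc]
  have hconst : k / Real.sqrt |g.det| * (Real.sqrt |g.det| / (2 * k)) = 1 / 2 := by
    field_simp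
  rw [hconst]
  linarith [hkeyl]
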